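/- Fix a real ω with 2 ≤ ω ≤ 3. Then for every integer k ≥ 2, one has α_k ≤ k. -/
import Mathlib


/-- `x_k = k * ∏_{j=2}^{k} ((5-2j)+(j-2)ω)`. -/
noncomputable def xk (ω : ℝ) (k : ℕ) : ℝ :=
  (k : ℝ) * ∏ j ∈ Finset.Icc 2 k, ((5 - 2 * (j : ℝ)) + ((j : ℝ) - 2) * ω)

/-- `y_k = (3-ω)^{k-2} + ∑_{j=2}^{k-1} (3-ω)^{k-1-j} x_j`. -/
noncomputable def yk (ω : ℝ) (k : ℕ) : ℝ :=
  (3 - ω) ^ (k - 2) + ∑ j ∈ Finset.Icc 2 (k - 1), (3 - ω) ^ (k - 1 - j) * xk ω j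

/-- `α_k = x_k / y_k`. -/
noncomputable def alphak (ω : ℝ) (k : ℕ) : ℝ := xk ω k / yk ω k

lemma factor_ge_one (ω : ℝ) (hω2 : 2 ≤ ω) {j : ℕ} (hj : 2 ≤ j) :
    (1 : ℝ) ≤ (5 - 2 * (j : ℝ)) + ((j : ℝ) - 2) * ω := by
  have hj' : (2 : ℝ) ≤ (j : ℝ) := by exact_mod_cast hj
  nlinarith

lemma Pk_ge_one (ω : ℝ) (hω2 : 2 ≤ ω) (k : ℕ) :
    (1 : ℝ) ≤ ∏ j ∈ Finset.Icc 2 k, ((5 - 2 * (j : ℝ)) + ((j : ℝ) - 2) * ω) := by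
  calc (1:ℝ) = ∏ _j ∈ Finset.Icc 2 k, (1:ℝ) := by simp
    _ ≤ ∏ j ∈ Finset.Icc 2 k, ((5 - 2 * (j : ℝ)) + ((j : ℝ) - 2) * ω) :=
      Finset.prod_le_prod (fun j _ => zero_le_one)
        (fun j hj => factor_ge_one ω hω2 (Finset.mem_Icc.mp hj).1)

lemma xk_nonneg (ω : ℝ) (hω2 : 2 ≤ ω) (k : ℕ) : 0 ≤ xk ω k := by
  unfold xk
  have := Pk_ge_one ω hω2 k
  positivity

lemma Pk_le_yk (ω : ℝ) (hω2 : 2 ≤ ω) (hω3 : ω ≤ 3) (k : ℕ) (hk : 2 ≤ k) :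
    (∏ j ∈ Finset.Icc 2 k, ((5 - 2 * (j : ℝ)) + ((j : ℝ) - 2) * ω)) ≤ yk ω k := by
  rcases Nat.lt_or_ge k 3 with h3 | h3
  · interval_cases k
    norm_num [yk, Finset.Icc_self]
  · obtain ⟨m, rfl⟩ : ∃ m, k = m + 1 := ⟨k - 1, by omega⟩
    have hm : 2 ≤ m := by omega
    -- split off the top factor
    have hsplit : (∏ j ∈ Finset.Icc 2 (m + 1), ((5 - 2 * (j : ℝ)) + ((j : ℝ) - 2) * ω))
        = (∏ j ∈ Finset.Icc 2 m, ((5 - 2 * (j : ℝ)) + ((j : ℝ) - 2) * ω))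
          * ((5 - 2 * ((m + 1 : ℕ) : ℝ)) + (((m + 1 : ℕ) : ℝ) - 2) * ω) :=
      Finset.prod_Icc_succ_top (by omega) _
    have hPm := Pk_ge_one ω hω2 m
    have hPm0 : (0:ℝ) ≤ ∏ j ∈ Finset.Icc 2 m, ((5 - 2 * (j : ℝ)) + ((j : ℝ) - 2) * ω) :=
      le_trans zero_le_one hPm
    have hmr : (2 : ℝ) ≤ (m : ℝ) := by exact_mod_cast hm
    have hfac : ((5 - 2 * ((m + 1 : ℕ) : ℝ)) + (((m + 1 : ℕ) : ℝ) - 2) * ω) ≤ (m : ℝ) := by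
      push_cast
      nlinarith
    have h1 : (∏ j ∈ Finset.Icc 2 (m + 1), ((5 - 2 * (j : ℝ)) + ((j : ℝ) - 2) * ω))
        ≤ xk ω m := by
      rw [hsplit, xk]
      calc (∏ j ∈ Finset.Icc 2 m, ((5 - 2 * (j : ℝ)) + ((j : ℝ) - 2) * ω))
            * ((5 - 2 * ((m + 1 : ℕ) : ℝ)) + (((m + 1 : ℕ) : ℝ) - 2) * ω)
          ≤ (∏ j ∈ Finset.Icc 2 m, ((5 - 2 * (j : ℝ)) + ((j : ℝ) - 2) * ω)) * (m : ℝ) :=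
            mul_le_mul_of_nonneg_left hfac hPm0
        _ = (m : ℝ) * ∏ j ∈ Finset.Icc 2 m, ((5 - 2 * (j : ℝ)) + ((j : ℝ) - 2) * ω) := by ring
    -- y_{m+1} ≥ x_m
    have h2 : xk ω m ≤ yk ω (m + 1) := by
      unfold yk
      have hmem : m ∈ Finset.Icc 2 (m + 1 - 1) := by
        simp only [Nat.add_sub_cancel]
        exact Finset.mem_Icc.mpr ⟨hm, le_refl m⟩
      have hterm : (3 - ω) ^ (m + 1 - 1 - m) * xk ω m = xk ω m := by
        simp
      have hsum : (3 - ω) ^ (m + 1 - 1 - m) * xk ω m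
          ≤ ∑ j ∈ Finset.Icc 2 (m + 1 - 1), (3 - ω) ^ (m + 1 - 1 - j) * xk ω j := by
        apply Finset.single_le_sum (f := fun j => (3 - ω) ^ (m + 1 - 1 - j) * xk ω j) _ hmem
        intro j hj
        have h3ω : (0:ℝ) ≤ 3 - ω := by linarith
        have := xk_nonneg ω hω2 j
        positivity
      have hpow : (0:ℝ) ≤ (3 - ω) ^ (m + 1 - 2) := by
        have h3ω : (0:ℝ) ≤ 3 - ω := by linarith
        positivity
      rw [hterm] at hsum
      linarith
    linarith

lemma yk_pos (ω : ℝ) (hω2 : 2 ≤ ω) (hω3 : ω ≤ 3) (k : ℕ) (hk : 2 ≤ k) :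
    0 < yk ω k :=
  lt_of_lt_of_le one_pos (le_trans (Pk_ge_one ω hω2 k) (Pk_le_yk ω hω2 hω3 k hk))

/-- For `2 ≤ ω ≤ 3` and every `k ≥ 2`: `α_k ≤ k`. -/
theorem alphak_upper_bound (ω : ℝ) (hω2 : 2 ≤ ω) (hω3 : ω ≤ 3) (k : ℕ) (hk : 2 ≤ k) :
    alphak ω k ≤ (k : ℝ) := by
  have hy := yk_pos ω hω2 hω3 k hk
  rw [alphak, div_le_iff₀ hy]
  have hP := Pk_le_yk ω hω2 hω3 k hk
  have hk0 : (0:ℝ) ≤ (k:ℝ) := Nat.cast_nonneg k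
  calc xk ω k = (k : ℝ) * ∏ j ∈ Finset.Icc 2 k, ((5 - 2 * (j : ℝ)) + ((j : ℝ) - 2) * ω) := rfl
    _ ≤ (k : ℝ) * yk ω k := mul_le_mul_of_nonneg_left hP hk0
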